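/- Let S be a finite alphabet, Q : S → ℝ a probability distribution with Q(x) > 0 for all x, and R ∈ ℝ. For λ > −1 and k = 0, 1, 2 define Z_k(λ) = ∑_{x∈S} Q(x)^{1/(1+λ)} (ln Q(x))^k, and let γ(λ) = λR − (1+λ) ln Z_0(λ). Then γ is twice differentiable on (−1, ∞) with γ''(λ) = −( Z_0(λ) Z_2(λ) − Z_1(λ)² ) / ( (1+λ)³ Z_0(λ)² ), and γ''(λ) ≤ 0 for all λ > −1. -/

import Mathlib

/-- For `γ(λ) = λR - (1+λ) ln Z₀(λ)` with
`Z_k(λ) = ∑ Q(x)^{1/(1+λ)} (ln Q(x))^k`, the function `γ` is twice differentiable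
on `(-1, ∞)` with `γ''(λ) = -(Z₀Z₂ - Z₁²)/((1+λ)³ Z₀²) ≤ 0`. -/
theorem second_deriv_error_exponent (S : Type*) [Fintype S]
    (Q : S → ℝ) (hQpos : ∀ x, 0 < Q x) (hQsum : ∑ x, Q x = 1) (R : ℝ)
    (Z : ℕ → ℝ → ℝ)
    (hZ : ∀ k l, Z k l = ∑ x, Q x ^ (1 / (1 + l)) * (Real.log (Q x)) ^ k)
    (γ : ℝ → ℝ)
    (hγ : ∀ l, γ l = l * R - (1 + l) * Real.log (Z 0 l)) :
    ∀ l : ℝ, -1 < l →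
      HasDerivAt (deriv γ)
          (-(Z 0 l * Z 2 l - Z 1 l ^ 2) / ((1 + l) ^ 3 * Z 0 l ^ 2)) l ∧
        -(Z 0 l * Z 2 l - Z 1 l ^ 2) / ((1 + l) ^ 3 * Z 0 l ^ 2) ≤ 0 := by
  have hne : (Finset.univ : Finset S).Nonempty := by
    rcases (Finset.univ : Finset S).eq_empty_or_nonempty with h | h
    · rw [h, Finset.sum_empty] at hQsum; norm_num at hQsum
    · exact h
  have hZ0pos : ∀ l : ℝ, 0 < Z 0 l := by
    intro l
    rw [hZ]
    apply Finset.sum_pos _ hne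
    intro x _
    simpa using Real.rpow_pos_of_pos (hQpos x) _
  have hZderiv : ∀ (k : ℕ) (l : ℝ), -1 < l →
      HasDerivAt (Z k) (-Z (k + 1) l / (1 + l) ^ 2) l := by
    intro k l hl
    have h1l : (0 : ℝ) < 1 + l := by linarith
    have hfun : Z k = fun m => ∑ x, Real.exp (Real.log (Q x) * (1 + m)⁻¹) *
        Real.log (Q x) ^ k := by
      funext m
      rw [hZ]
      refine Finset.sum_congr rfl fun x _ => ?_
      rw [Real.rpow_def_of_pos (hQpos x), one_div]
    rw [hfun]
    have hsum : HasDerivAt (fun m => ∑ x, Real.exp (Real.log (Q x) * (1 + m)⁻¹) *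
        Real.log (Q x) ^ k)
        (∑ x, (Real.exp (Real.log (Q x) * (1 + l)⁻¹) *
          (Real.log (Q x) * (-1 / (1 + l) ^ 2))) * Real.log (Q x) ^ k) l := by
      apply HasDerivAt.fun_sum
      intro x _
      have h1 : HasDerivAt (fun m : ℝ => 1 + m) 1 l := (hasDerivAt_id l).const_add 1
      have h2 : HasDerivAt (fun m : ℝ => (1 + m)⁻¹) (-1 / (1 + l) ^ 2) l := by
        simpa using h1.fun_inv h1l.ne'
      exact ((h2.const_mul (Real.log (Q x))).exp).mul_const _
    have heq : (∑ x, (Real.exp (Real.log (Q x) * (1 + l)⁻¹) *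
          (Real.log (Q x) * (-1 / (1 + l) ^ 2))) * Real.log (Q x) ^ k)
        = -Z (k + 1) l / (1 + l) ^ 2 := by
      rw [hZ, ← Finset.sum_neg_distrib, Finset.sum_div]
      refine Finset.sum_congr rfl fun x _ => ?_
      rw [Real.rpow_def_of_pos (hQpos x), one_div, pow_succ]
      ring
    rw [heq] at hsum
    exact hsum
  set g : ℝ → ℝ := fun m => R - Real.log (Z 0 m) + Z 1 m / ((1 + m) * Z 0 m) with hg
  have hA : ∀ l : ℝ, -1 < l → HasDerivAt γ (g l) l := by
    intro l hl
    have h1l : (0 : ℝ) < 1 + l := by linarith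
    have hγfun : γ = fun m => m * R - (1 + m) * Real.log (Z 0 m) := funext hγ
    rw [hγfun]
    have h1 : HasDerivAt (fun m : ℝ => 1 + m) 1 l := (hasDerivAt_id l).const_add 1
    have hz0 := hZderiv 0 l hl
    have hlog : HasDerivAt (fun m => Real.log (Z 0 m))
        ((-Z (0 + 1) l / (1 + l) ^ 2) / Z 0 l) l := hz0.log (hZ0pos l).ne'
    have hmain := ((hasDerivAt_id l).mul_const R).fun_sub (h1.fun_mul hlog)
    refine hmain.congr_deriv ?_
    have hz0ne := (hZ0pos l).ne'
    simp only [hg, Nat.zero_add]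
    field_simp
    ring
  have hB : ∀ l : ℝ, -1 < l →
      HasDerivAt g (-(Z 0 l * Z 2 l - Z 1 l ^ 2) / ((1 + l) ^ 3 * Z 0 l ^ 2)) l := by
    intro l hl
    have h1l : (0 : ℝ) < 1 + l := by linarith
    have hz0 := hZderiv 0 l hl
    have hz1 : HasDerivAt (Z 1) (-Z 2 l / (1 + l) ^ 2) l := by
      simpa using hZderiv 1 l hl
    have hz0' : HasDerivAt (Z 0) (-Z 1 l / (1 + l) ^ 2) l := by
      simpa using hz0
    have h1 : HasDerivAt (fun m : ℝ => 1 + m) 1 l := (hasDerivAt_id l).const_add 1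
    have hdenne : (1 + l) * Z 0 l ≠ 0 := by
      exact mul_ne_zero h1l.ne' (hZ0pos l).ne'
    have hden : HasDerivAt (fun m => (1 + m) * Z 0 m)
        (1 * Z 0 l + (1 + l) * (-Z 1 l / (1 + l) ^ 2)) l := h1.mul hz0'
    have hdiv : HasDerivAt (fun m => Z 1 m / ((1 + m) * Z 0 m))
        (((-Z 2 l / (1 + l) ^ 2) * ((1 + l) * Z 0 l) -
          Z 1 l * (1 * Z 0 l + (1 + l) * (-Z 1 l / (1 + l) ^ 2))) /
          ((1 + l) * Z 0 l) ^ 2) l := hz1.div hden hdenne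
    have hlog : HasDerivAt (fun m => Real.log (Z 0 m))
        ((-Z 1 l / (1 + l) ^ 2) / Z 0 l) l := hz0'.log (hZ0pos l).ne'
    have hmain := ((hasDerivAt_const l R).fun_sub hlog).fun_add hdiv
    refine hmain.congr_deriv ?_
    have hz0ne := (hZ0pos l).ne'
    have h1ne := h1l.ne'
    field_simp
    ring
  intro l hl
  constructor
  · have hev : deriv γ =ᶠ[nhds l] g := by
      filter_upwards [isOpen_Ioi.mem_nhds (show l ∈ Set.Ioi (-1 : ℝ) from hl)] with m hm
      exact (hA m hm).deriv
    exact hev.hasDerivAt_iff.mpr (hB l hl)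
  · have h1l : (0 : ℝ) < 1 + l := by linarith
    have hcs : Z 1 l ^ 2 ≤ Z 0 l * Z 2 l := by
      have key := Finset.sum_mul_sq_le_sq_mul_sq Finset.univ
        (fun x => Real.sqrt (Q x ^ (1 / (1 + l))))
        (fun x => Real.sqrt (Q x ^ (1 / (1 + l))) * Real.log (Q x))
      have e1 : (∑ x, Real.sqrt (Q x ^ (1 / (1 + l))) *
          (Real.sqrt (Q x ^ (1 / (1 + l))) * Real.log (Q x))) = Z 1 l := by
        rw [hZ]
        refine Finset.sum_congr rfl fun x _ => ?_
        rw [← mul_assoc, Real.mul_self_sqrt (Real.rpow_nonneg (hQpos x).le _)]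
        ring
      have e2 : (∑ x, Real.sqrt (Q x ^ (1 / (1 + l))) ^ 2) = Z 0 l := by
        rw [hZ]
        refine Finset.sum_congr rfl fun x _ => ?_
        rw [Real.sq_sqrt (Real.rpow_nonneg (hQpos x).le _)]
        ring
      have e3 : (∑ x, (Real.sqrt (Q x ^ (1 / (1 + l))) * Real.log (Q x)) ^ 2) = Z 2 l := by
        rw [hZ]
        refine Finset.sum_congr rfl fun x _ => ?_
        rw [mul_pow, Real.sq_sqrt (Real.rpow_nonneg (hQpos x).le _)]
      rw [e1, e2, e3] at key
      exact key
    have hpos : (0 : ℝ) < (1 + l) ^ 3 * Z 0 l ^ 2 := mul_pos (pow_pos h1l 3) (pow_pos (hZ0pos l) 2)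
    rw [neg_div]
    exact neg_nonpos.mpr (div_nonneg (by linarith) hpos.le)
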